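/- If a group G admits a Conradian left-invariant total order ≺ having only finitely many ≺-convex subgroups, then G is solvable. -/

import Mathlib

/-- A left-invariant total order (left order) on a group `G`. -/
def IsLeftOrder {G : Type*} [Group G] (r : G → G → Prop) : Prop :=
  IsStrictTotalOrder G r ∧ ∀ h f g : G, r f g → r (h * f) (h * g)

/-- A subgroup `C` is convex for `r` if `f ≺ g ≺ h` with `f, h ∈ C` implies `g ∈ C`. -/
def IsConvexSubgroup {G : Type*} [Group G] (r : G → G → Prop) (C : Subgroup G) : Prop :=
  ∀ f g h : G, f ∈ C → h ∈ C → r f g → r g h → g ∈ C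

/-- A left order is Conradian if for all positive `f, g` there is `k : ℕ`
with `g ≺ f·gᵏ`. -/
def IsConradian {G : Type*} [Group G] (r : G → G → Prop) : Prop :=
  ∀ f g : G, r 1 f → r 1 g → ∃ k : ℕ, r g (f * g ^ k)

namespace ConradAux

variable {G : Type*} [Group G] {r : G → G → Prop}

theorem rtrans (hr : IsLeftOrder r) {a b c : G} (h1 : r a b) (h2 : r b c) : r a c := by
  haveI := hr.1; exact _root_.trans_of r h1 h2

theorem rirr (hr : IsLeftOrder r) (a : G) : ¬ r a a := by
  haveI := hr.1; exact irrefl_of r a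

theorem rtri (hr : IsLeftOrder r) (a b : G) : r a b ∨ a = b ∨ r b a := by
  haveI := hr.1; exact trichotomous_of r a b

theorem rasym (hr : IsLeftOrder r) {a b : G} (h1 : r a b) (h2 : r b a) : False :=
  rirr hr a (rtrans hr h1 h2)

theorem lmul (hr : IsLeftOrder r) (h : G) {a b : G} (hab : r a b) : r (h * a) (h * b) :=
  hr.2 h a b hab

theorem lmul_cancel (hr : IsLeftOrder r) {h a b : G} (hab : r (h * a) (h * b)) : r a b := by
  have := lmul hr h⁻¹ hab; simpa using this

theorem pos_iff (hr : IsLeftOrder r) {a b : G} : r a b ↔ r 1 (a⁻¹ * b) := by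
  constructor
  · intro h; simpa using lmul hr a⁻¹ h
  · intro h; simpa using lmul hr a h

theorem inv_neg' (hr : IsLeftOrder r) {a : G} (h : r 1 a) : r a⁻¹ 1 := by
  simpa using lmul hr a⁻¹ h

theorem neg_inv' (hr : IsLeftOrder r) {a : G} (h : r a 1) : r 1 a⁻¹ := by
  simpa using lmul hr a⁻¹ h

theorem pos_pow (hr : IsLeftOrder r) {a : G} (h : r 1 a) : ∀ n : ℕ, a ^ n = 1 ∨ r 1 (a ^ n) := by
  intro n; induction n with
  | zero => left; simp
  | succ n ih =>
    right
    rcases ih with h1 | h1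
    · rw [pow_succ, h1, one_mul]; exact h
    · have h2 : r (a ^ n) (a ^ n * a) := by simpa using lmul hr (a ^ n) h
      rw [pow_succ]; exact rtrans hr h1 h2

theorem pos_pow' (hr : IsLeftOrder r) {a : G} (h : r 1 a) {n : ℕ} (hn : n ≠ 0) : r 1 (a ^ n) := by
  obtain ⟨m, rfl⟩ : ∃ m, n = m + 1 := ⟨n - 1, by omega⟩
  rcases pos_pow hr h m with h1 | h1
  · rw [pow_succ, h1, one_mul]; exact h
  · rw [pow_succ]
    exact rtrans hr h1 (by simpa using lmul hr (a ^ m) h : r (a ^ m) (a ^ m * a))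

theorem neg_pow (hr : IsLeftOrder r) {a : G} (h : a = 1 ∨ r a 1) :
    ∀ n : ℕ, a ^ n = 1 ∨ r (a ^ n) 1 := by
  rcases h with rfl | h
  · intro n; left; simp
  intro n; induction n with
  | zero => left; simp
  | succ n ih =>
    right
    rcases ih with h1 | h1
    · rw [pow_succ, h1, one_mul]; exact h
    · have h2 : r (a ^ n * a) (a ^ n) := by simpa using lmul hr (a ^ n) h
      rw [pow_succ]; exact rtrans hr h2 h1

theorem pow_lt_pow' (hr : IsLeftOrder r) {a : G} (h : r 1 a) {i j : ℕ} (hij : i < j) :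
    r (a ^ i) (a ^ j) := by
  have h1 : r 1 (a ^ (j - i)) := pos_pow' hr h (by omega)
  have h2 := lmul hr (a ^ i) h1
  rw [mul_one, ← pow_add] at h2
  have : i + (j - i) = j := by omega
  rwa [this] at h2

theorem le_pow_mono (hr : IsLeftOrder r) {a z : G} (h : r 1 a) {i j : ℕ} (hz : r z (a ^ i))
    (hij : i ≤ j) : r z (a ^ j) := by
  rcases Nat.eq_or_lt_of_le hij with rfl | h2
  · exact hz
  · exact rtrans hr hz (pow_lt_pow' hr h h2)

section conrad
variable (hr : IsLeftOrder r) (hc : IsConradian r)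

theorem claim1 (hr : IsLeftOrder r) (hc : IsConradian r) {f x : G} (hf : r 1 f) {N : ℕ}
    (hx : r x (f ^ N)) : ∃ K, r (x * f) (f ^ K) := by
  set b := x⁻¹ * f ^ N with hbdef
  have hb : r 1 b := (pos_iff hr).1 hx
  have hxb : x * b = f ^ N := by rw [hbdef, mul_inv_cancel_left]
  rcases rtri hr f b with h | h | h
  · refine ⟨N, ?_⟩
    have := lmul hr x h
    rwa [hxb] at this
  · refine ⟨N + 1, ?_⟩
    have hxf : x * f = f ^ N := by
      have : x * f = x * b := by rw [h]
      rw [this, hxb]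
    rw [hxf]; exact pow_lt_pow' hr hf (Nat.lt_succ_self N)
  · obtain ⟨k, hk⟩ := hc b f hb hf
    refine ⟨N + k, ?_⟩
    have h2 := lmul hr x hk
    rwa [← mul_assoc, hxb, ← pow_add] at h2

theorem claim2 (hr : IsLeftOrder r) (hc : IsConradian r) {f x : G} (hf : r 1 f) {N : ℕ}
    (hx : r x (f ^ N)) : ∀ m : ℕ, ∃ K, r (x * f ^ m) (f ^ K) := by
  intro m; induction m with
  | zero => exact ⟨N, by simpa using hx⟩
  | succ m ih =>
    obtain ⟨K, hK⟩ := ih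
    obtain ⟨K', hK'⟩ := claim1 hr hc hf hK
    exact ⟨K', by rwa [pow_succ, ← mul_assoc]⟩

theorem mul_bound (hr : IsLeftOrder r) (hc : IsConradian r) {f x y : G} (hf : r 1 f) {N M : ℕ}
    (hx : r x (f ^ N)) (hy : r y (f ^ M)) : ∃ K, r (x * y) (f ^ K) := by
  obtain ⟨K, hK⟩ := claim2 hr hc hf hx M
  exact ⟨K, rtrans hr (lmul hr x hy) hK⟩

theorem lemB (hr : IsLeftOrder r) (hc : IsConradian r) {f w : G} (hf : r 1 f) (hw : r 1 w)
    (n : ℕ) : ∃ K, r (w⁻¹ * f ^ n) (f ^ K) := by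
  rcases Nat.eq_zero_or_pos n with rfl | hn
  · refine ⟨1, ?_⟩
    rw [pow_zero, mul_one, pow_one]
    exact rtrans hr (inv_neg' hr hw) hf
  · obtain ⟨k, hk⟩ := hc w (f ^ n) hw (pos_pow' hr hf (by omega))
    refine ⟨n * k, ?_⟩
    have h2 := lmul hr w⁻¹ hk
    rwa [inv_mul_cancel_left, ← pow_mul] at h2

/-- The subgroup of `f`-bounded elements. -/
def boundedSubgroup (hr : IsLeftOrder r) (hc : IsConradian r) (f : G) (hf : r 1 f) :
    Subgroup G where
  carrier := {g | ∃ n : ℕ, r g (f ^ n) ∧ r g⁻¹ (f ^ n)}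
  one_mem' := ⟨1, by simpa using hf, by simpa using hf⟩
  inv_mem' := by
    rintro g ⟨n, h1, h2⟩
    exact ⟨n, h2, by simpa using h1⟩
  mul_mem' := by
    rintro g h ⟨n, hg1, hg2⟩ ⟨m, hh1, hh2⟩
    obtain ⟨K1, hK1⟩ := mul_bound hr hc hf hg1 hh1
    obtain ⟨K2, hK2⟩ := mul_bound hr hc hf hh2 hg2
    refine ⟨max K1 K2, le_pow_mono hr hf hK1 (le_max_left _ _), ?_⟩
    rw [mul_inv_rev]
    exact le_pow_mono hr hf hK2 (le_max_right _ _)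

theorem mem_boundedSubgroup {f : G} (hr : IsLeftOrder r) (hc : IsConradian r) (hf : r 1 f)
    {g : G} : g ∈ boundedSubgroup hr hc f hf ↔ ∃ n : ℕ, r g (f ^ n) ∧ r g⁻¹ (f ^ n) :=
  Iff.rfl

theorem boundedSubgroup_convex (hr : IsLeftOrder r) (hc : IsConradian r) {f : G} (hf : r 1 f) :
    IsConvexSubgroup r (boundedSubgroup hr hc f hf) := by
  rintro x g z ⟨nx, hx1, hx2⟩ ⟨nz, hz1, hz2⟩ hxg hgz
  have hup : r g (f ^ nz) := rtrans hr hgz hz1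
  have hinv : ∃ K, r g⁻¹ (f ^ K) := by
    rcases rtri hr 1 g with h | h | h
    · exact ⟨1, by rw [pow_one]; exact rtrans hr (inv_neg' hr h) hf⟩
    · exact ⟨1, by rw [pow_one, ← h, inv_one]; exact hf⟩
    · set w := x⁻¹ * g with hwdef
      have hw : r 1 w := (pos_iff hr).1 hxg
      have hginv : g⁻¹ = w⁻¹ * x⁻¹ := by rw [hwdef]; group
      obtain ⟨K, hK⟩ := lemB hr hc hf hw nx
      refine ⟨K, ?_⟩
      rw [hginv]
      exact rtrans hr (lmul hr w⁻¹ hx2) hK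
  obtain ⟨K, hK⟩ := hinv
  exact ⟨max nz K, le_pow_mono hr hf hup (le_max_left _ _),
    le_pow_mono hr hf hK (le_max_right _ _)⟩

end conrad

section withC
variable {C : Subgroup G}

theorem lt_of_memC (hr : IsLeftOrder r) (hC : IsConvexSubgroup r C) {f c : G} (hf : r 1 f)
    (hfC : f ∉ C) (hcC : c ∈ C) : r c f := by
  rcases rtri hr c f with h | h | h
  · exact h
  · exact absurd (h ▸ hcC) hfC
  · exact absurd (hC 1 f c C.one_mem hcC hf h) hfC

theorem inv_lt_memC (hr : IsLeftOrder r) (hC : IsConvexSubgroup r C) {f c : G} (hf : r 1 f)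
    (hfC : f ∉ C) (hcC : c ∈ C) : r f⁻¹ c := by
  rcases rtri hr f⁻¹ c with h | h | h
  · exact h
  · exfalso; apply hfC; have : f = c⁻¹ := by rw [← h, inv_inv]
    rw [this]; exact C.inv_mem hcC
  · exfalso; apply hfC
    have hm : f⁻¹ ∈ C := hC c f⁻¹ 1 hcC C.one_mem h (inv_neg' hr hf)
    simpa using C.inv_mem hm

theorem neg_lt_memC (hr : IsLeftOrder r) (hC : IsConvexSubgroup r C) {h c : G} (hneg : r h 1)
    (hhC : h ∉ C) (hcC : c ∈ C) : r h c := by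
  rcases rtri hr h c with h1 | h1 | h1
  · exact h1
  · exact absurd (h1 ▸ hcC) hhC
  · exact absurd (hC c h 1 hcC C.one_mem h1 hneg) hhC

theorem UBT (hr : IsLeftOrder r) (hc : IsConradian r) (hC : IsConvexSubgroup r C)
    (hmax : ∀ D : Subgroup G, IsConvexSubgroup r D → C < D → D = ⊤)
    {f : G} (hf : r 1 f) (hfC : f ∉ C) (x : G) : ∃ n : ℕ, r x (f ^ n) ∧ r x⁻¹ (f ^ n) := by
  have hCle : C ≤ boundedSubgroup hr hc f hf := by
    intro c hcC
    exact ⟨1, by rw [pow_one]; exact lt_of_memC hr hC hf hfC hcC,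
      by rw [pow_one]; exact lt_of_memC hr hC hf hfC (C.inv_mem hcC)⟩
  have hfmem : f ∈ boundedSubgroup hr hc f hf := by
    refine ⟨2, ?_, ?_⟩
    · have := pow_lt_pow' hr hf (show 1 < 2 by norm_num)
      rwa [pow_one] at this
    · exact rtrans hr (inv_neg' hr hf) (pos_pow' hr hf (by norm_num))
  have hlt : C < boundedSubgroup hr hc f hf :=
    lt_of_le_of_ne hCle (fun h => hfC (h ▸ hfmem))
  have htop := hmax _ (boundedSubgroup_convex hr hc hf) hlt
  have : x ∈ boundedSubgroup hr hc f hf := by rw [htop]; trivial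
  exact this

end withC

section core
variable {C : Subgroup G}

theorem core (hr : IsLeftOrder r) (hc : IsConradian r) (hC : IsConvexSubgroup r C)
    (hmax : ∀ D : Subgroup G, IsConvexSubgroup r D → C < D → D = ⊤)
    {f : G} (hf : r 1 f) (hfC : f ∉ C) {B : G} (hB : r 1 B) :
    ∃ K : ℕ, ¬ r 1 (B * (f ^ K)⁻¹) := by
  by_contra hcon
  push_neg at hcon
  -- ZZ X := ∀ K, r 1 (X * (f ^ K)⁻¹)
  have step1 : ∃ s : ℕ, ¬ ∀ K : ℕ, r 1 ((f ^ s)⁻¹ * B * (f ^ K)⁻¹) := by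
    obtain ⟨N, hN, -⟩ := UBT hr hc hC hmax hf hfC B
    refine ⟨N, fun hall => ?_⟩
    have h0 := hall 0
    rw [pow_zero, inv_one, mul_one] at h0
    exact rasym hr hN ((pos_iff hr).2 h0)
  classical
  set s₀ := Nat.find step1 with hs₀def
  have hs₀spec := Nat.find_spec step1
  have hs₀pos : s₀ ≠ 0 := by
    intro h0
    apply hs₀spec
    intro K
    have := hcon K
    rw [hs₀def] at h0
    rw [h0, pow_zero, inv_one, one_mul]
    exact hcon K
  set X := (f ^ (s₀ - 1))⁻¹ * B with hXdef
  have hZX : ∀ K : ℕ, r 1 (X * (f ^ K)⁻¹) :=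
    not_not.1 (Nat.find_min step1 (show s₀ - 1 < s₀ by omega))
  have hnX : ¬ ∀ K : ℕ, r 1 (f⁻¹ * X * (f ^ K)⁻¹) := by
    intro hall
    apply hs₀spec
    intro K
    have h1 := hall K
    have hrw : f⁻¹ * X = (f ^ s₀)⁻¹ * B := by
      rw [hXdef, ← mul_assoc, ← mul_inv_rev, ← pow_succ,
        show s₀ - 1 + 1 = s₀ by omega]
    rwa [hrw] at h1
  obtain ⟨K₀, hK₀⟩ : ∃ K, ¬ r 1 (f⁻¹ * X * (f ^ K)⁻¹) := by
    by_contra hcon2; push_neg at hcon2; exact hnX hcon2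
  set A := X * (f ^ K₀)⁻¹ with hAdef
  have hApos : r 1 A := hZX K₀
  have hAf : A = f ∨ r A f := by
    rcases rtri hr f A with h1 | h1 | h1
    · exfalso
      apply hK₀
      have h2 : r 1 (f⁻¹ * A) := (pos_iff hr).1 h1
      rwa [hAdef, ← mul_assoc] at h2
    · exact Or.inl h1.symm
    · exact Or.inr h1
  have hZA : ∀ K : ℕ, r 1 (A * (f ^ K)⁻¹) := by
    intro K
    have h1 := hZX (K + K₀)
    rwa [pow_add, mul_inv_rev, ← mul_assoc] at h1
  set x := A * f⁻¹ with hxdef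
  have hxpos : r 1 x := by have := hZA 1; rwa [pow_one] at this
  have hxC : x ∉ C := by
    intro hxmem
    have h1 : r f⁻¹ x⁻¹ := inv_lt_memC hr hC hf hfC (C.inv_mem hxmem)
    have h2 : r (x * f⁻¹) 1 := by have := lmul hr x h1; simpa using this
    have h3 : r 1 (x * f⁻¹) := by
      have := hZA 2
      have hrw : A * (f ^ 2)⁻¹ = x * f⁻¹ := by rw [hxdef]; group
      rwa [hrw] at this
    exact rasym hr h3 h2
  obtain ⟨N, hfx, -⟩ := UBT hr hc hC hmax hxpos hxC f
  set y := f⁻¹ * A with hydef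
  have hy : y = 1 ∨ r y 1 := by
    rcases hAf with h1 | h1
    · left; rw [hydef, h1, inv_mul_cancel]
    · right; have := lmul hr f⁻¹ h1; simpa [hydef] using this
  have hyx : f⁻¹ * x * f = y := by rw [hxdef, hydef]; group
  have hcp : f⁻¹ * x ^ N * f = y ^ N := by
    have h1 : (f⁻¹ * x * (f⁻¹)⁻¹) ^ N = f⁻¹ * x ^ N * (f⁻¹)⁻¹ := conj_pow
    rw [inv_inv] at h1
    rw [← h1, hyx]
  have hyN := neg_pow hr hy N
  rw [← hcp] at hyN
  have h5 : r f (x ^ N * f) :=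
    rtrans hr hfx (by simpa using lmul hr (x ^ N) hf)
  rcases hyN with h4 | h4
  · have : x ^ N * f = f := by
      have := congrArg (fun z => f * z) h4
      simpa [mul_assoc] using this
    rw [this] at h5
    exact rirr hr f h5
  · have h6 := lmul hr f h4
    rw [mul_one] at h6
    have h7 : f * (f⁻¹ * x ^ N * f) = x ^ N * f := by group
    rw [h7] at h6
    exact rasym hr h5 h6

theorem LBT (hr : IsLeftOrder r) (hc : IsConradian r) (hC : IsConvexSubgroup r C)
    (hmax : ∀ D : Subgroup G, IsConvexSubgroup r D → C < D → D = ⊤)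
    {f : G} (hf : r 1 f) (hfC : f ∉ C) (x : G) : ∃ m : ℕ, r ((f ^ m)⁻¹) x := by
  rcases rtri hr 1 x with h | h | h
  · exact ⟨1, rtrans hr (by rw [pow_one]; exact inv_neg' hr hf) h⟩
  · exact ⟨1, by rw [pow_one, ← h]; exact inv_neg' hr hf⟩
  · have hB : r 1 x⁻¹ := neg_inv' hr h
    obtain ⟨K, hK⟩ := core hr hc hC hmax hf hfC hB
    rcases rtri hr 1 (x⁻¹ * (f ^ K)⁻¹) with h1 | h1 | h1
    · exact absurd h1 hK
    · have hx : x = (f ^ K)⁻¹ := by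
        have h2 : x⁻¹ = f ^ K := by
          have := congrArg (fun z => z * f ^ K) h1.symm
          simpa using this
        rw [← h2, inv_inv]
      refine ⟨K + 1, ?_⟩
      rw [hx]
      refine (pos_iff hr).2 ?_
      rw [inv_inv, pow_succ', mul_inv_cancel_right]
      exact hf
    · have h2 : r 1 ((x⁻¹ * (f ^ K)⁻¹)⁻¹) := neg_inv' hr h1
      rw [mul_inv_rev, inv_inv, inv_inv] at h2
      exact ⟨K, (pos_iff hr).2 (by rwa [inv_inv])⟩

theorem aux_norm (hr : IsLeftOrder r) (hc : IsConradian r) (hC : IsConvexSubgroup r C)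
    (hmax : ∀ D : Subgroup G, IsConvexSubgroup r D → C < D → D = ⊤)
    {c g : G} (hcC : c ∈ C) (hd : r 1 (g * c * g⁻¹)) (hdC : g * c * g⁻¹ ∉ C) : False := by
  set d := g * c * g⁻¹ with hddef
  have hdn : ∀ n : ℕ, d ^ n = g * c ^ n * g⁻¹ := fun n => conj_pow
  obtain ⟨n, hg1, -⟩ := UBT hr hc hC hmax hd hdC g
  obtain ⟨m, hg2⟩ := LBT hr hc hC hmax hd hdC g
  have e1 : r ((c ^ n)⁻¹) g⁻¹ := by
    rw [hdn] at hg1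
    have h1 := lmul hr g⁻¹ hg1
    rw [inv_mul_cancel, ← mul_assoc, ← mul_assoc, inv_mul_cancel, one_mul] at h1
    have h2 := lmul hr (c ^ n)⁻¹ h1
    rwa [mul_one, ← mul_assoc, inv_mul_cancel, one_mul] at h2
  have e2 : r g⁻¹ (c ^ m) := by
    have h0 : (d ^ m)⁻¹ = g * (c ^ m)⁻¹ * g⁻¹ := by rw [hdn]; group
    rw [h0] at hg2
    have h1 := lmul hr g⁻¹ hg2
    rw [inv_mul_cancel, ← mul_assoc, ← mul_assoc, inv_mul_cancel, one_mul] at h1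
    have h2 := lmul hr (c ^ m) h1
    rwa [mul_one, ← mul_assoc, mul_inv_cancel, one_mul] at h2
  have hgC : g⁻¹ ∈ C :=
    hC ((c ^ n)⁻¹) g⁻¹ (c ^ m) (C.inv_mem (C.pow_mem hcC n)) (C.pow_mem hcC m) e1 e2
  have hg : g ∈ C := by simpa using C.inv_mem hgC
  exact hdC (C.mul_mem (C.mul_mem hg hcC) hgC)

theorem conj_memC (hr : IsLeftOrder r) (hc : IsConradian r) (hC : IsConvexSubgroup r C)
    (hmax : ∀ D : Subgroup G, IsConvexSubgroup r D → C < D → D = ⊤) :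
    ∀ c ∈ C, ∀ g : G, g * c * g⁻¹ ∈ C := by
  intro c hcC g
  by_contra hdC
  rcases rtri hr 1 (g * c * g⁻¹) with h | h | h
  · exact aux_norm hr hc hC hmax hcC h hdC
  · exact hdC (by rw [← h]; exact C.one_mem)
  · have h2 : r 1 (g * c⁻¹ * g⁻¹) := by
      have := neg_inv' hr h
      rwa [show (g * c * g⁻¹)⁻¹ = g * c⁻¹ * g⁻¹ from by group] at this
    have h3 : g * c⁻¹ * g⁻¹ ∉ C := by
      intro hm
      have := C.inv_mem hm
      rw [show (g * c⁻¹ * g⁻¹)⁻¹ = g * c * g⁻¹ from by group] at this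
      exact hdC this
    exact aux_norm hr hc hC hmax (C.inv_mem hcC) h2 h3

end core

section holder

theorem holder_comm {H : Type*} [Group H] [LinearOrder H]
    [CovariantClass H H (· * ·) (· < ·)]
    [CovariantClass H H (Function.swap (· * ·)) (· < ·)]
    (arch : ∀ x ε : H, 1 < ε → ∃ n : ℕ, x < ε ^ n) : ∀ a b : H, a * b = b * a := by
  haveI : CovariantClass H H (· * ·) (· ≤ ·) := covariantClass_le_of_lt H H _
  haveI : CovariantClass H H (Function.swap (· * ·)) (· ≤ ·) := covariantClass_le_of_lt H H _
  -- zpow monotonicity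
  have zlt : ∀ {ε : H}, 1 < ε → ∀ {i j : ℤ}, i < j → ε ^ i < ε ^ j := by
    intro ε hε i j hij
    have h1 : (1 : H) < ε ^ (j - i) := by
      have h2 : ε ^ (j - i) = ε ^ (j - i).toNat := by
        rw [← zpow_natCast]
        congr 1
        omega
      rw [h2]
      exact one_lt_pow' hε (by omega)
    calc ε ^ i = ε ^ i * 1 := by rw [mul_one]
      _ < ε ^ i * ε ^ (j - i) := mul_lt_mul_right h1 _
      _ = ε ^ j := by rw [← zpow_add]; congr 1; ring
  -- bracketing
  have bracket : ∀ (ε : H), 1 < ε → ∀ x : H, ∃ p : ℤ, ε ^ p ≤ x ∧ x < ε ^ (p + 1) := by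
    intro ε hε x
    obtain ⟨N, hN⟩ := arch x ε hε
    obtain ⟨M, hM⟩ := arch x⁻¹ ε hε
    have hlow : ε ^ (-(M : ℤ)) < x := by
      have h1 : (1 : H) < x * ε ^ M := by
        have := mul_lt_mul_right hM x
        rwa [mul_inv_cancel] at this
      have h2 := mul_lt_mul_left h1 (ε ^ M)⁻¹
      rw [one_mul, mul_assoc, mul_inv_cancel, mul_one] at h2
      rwa [zpow_neg, zpow_natCast]
    have Hinh : ∃ z : ℤ, x < ε ^ z := ⟨N, by rwa [zpow_natCast]⟩
    have Hbdd : ∃ b : ℤ, ∀ z : ℤ, x < ε ^ z → b ≤ z := by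
      refine ⟨-(M : ℤ), fun z hz => ?_⟩
      by_contra hlt
      push_neg at hlt
      exact absurd (hz.trans (zlt hε hlt)) (not_lt.2 hlow.le)
    obtain ⟨lb, hlb1, hlb2⟩ := Int.exists_least_of_bdd Hbdd Hinh
    refine ⟨lb - 1, ?_, by rwa [sub_add_cancel]⟩
    by_contra hlt
    push_neg at hlt
    exact absurd (hlb2 _ hlt) (by omega)
  by_cases hmin : ∃ a₀ : H, 1 < a₀ ∧ ∀ z : H, 1 < z → a₀ ≤ z
  · -- cyclic case
    obtain ⟨a₀, ha₀, hmin'⟩ := hmin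
    have key : ∀ x : H, ∃ k : ℤ, x = a₀ ^ k := by
      intro x
      obtain ⟨p, h1, h2⟩ := bracket a₀ ha₀ x
      have h3 : (1 : H) ≤ (a₀ ^ p)⁻¹ * x := by
        have := mul_le_mul_right h1 (a₀ ^ p)⁻¹
        rwa [inv_mul_cancel] at this
      have h4 : (a₀ ^ p)⁻¹ * x < a₀ := by
        have := mul_lt_mul_right h2 (a₀ ^ p)⁻¹
        rwa [show (a₀ ^ p)⁻¹ * a₀ ^ (p + 1) = a₀ from by
          rw [← zpow_neg, ← zpow_add]; norm_num] at this
      rcases h3.eq_or_lt with h5 | h5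
      · refine ⟨p, ?_⟩
        have := congrArg (fun z => a₀ ^ p * z) h5
        exact (by simpa [mul_inv_cancel_left] using this : a₀ ^ p = x).symm
      · exact absurd (hmin' _ h5) (not_le.2 h4)
    intro a b
    obtain ⟨i, rfl⟩ := key a
    obtain ⟨j, rfl⟩ := key b
    rw [← zpow_add, ← zpow_add, add_comm]
  · -- dense case
    push_neg at hmin
    have aux : ∀ a b : H, 1 < (b * a)⁻¹ * (a * b) → False := by
      intro a b hc1
      set c := (b * a)⁻¹ * (a * b) with hcdef
      obtain ⟨w, hw1, hwc⟩ := hmin c hc1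
      have hcw : (1 : H) < c * w⁻¹ := by
        have := mul_lt_mul_left hwc w⁻¹
        rwa [mul_inv_cancel] at this
      obtain ⟨ε, hε1, hεsq⟩ : ∃ ε : H, 1 < ε ∧ ε * ε ≤ c := by
        rcases le_total w (c * w⁻¹) with h | h
        · refine ⟨w, hw1, ?_⟩
          calc w * w ≤ c * w⁻¹ * w := mul_le_mul_left h w
            _ = c := by rw [inv_mul_cancel_right]
        · refine ⟨c * w⁻¹, hcw, ?_⟩
          calc c * w⁻¹ * (c * w⁻¹) ≤ c * w⁻¹ * w := mul_le_mul_right h _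
            _ = c := by rw [inv_mul_cancel_right]
      obtain ⟨p, hap1, hap2⟩ := bracket ε hε1 a
      obtain ⟨q, hbq1, hbq2⟩ := bracket ε hε1 b
      have h1 : a * b < ε ^ (p + q + 2) := by
        calc a * b < a * ε ^ (q + 1) := mul_lt_mul_right hbq2 a
          _ < ε ^ (p + 1) * ε ^ (q + 1) := mul_lt_mul_left hap2 _
          _ = ε ^ (p + q + 2) := by rw [← zpow_add]; congr 1; ring
      have h2 : ε ^ (p + q) ≤ b * a := by
        calc ε ^ (p + q) = ε ^ q * ε ^ p := by rw [← zpow_add]; congr 1; ring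
          _ ≤ ε ^ q * a := mul_le_mul_right hap1 _
          _ ≤ b * a := mul_le_mul_left hbq1 a
      have h3 : (b * a)⁻¹ ≤ (ε ^ (p + q))⁻¹ := by
        have h4 := mul_le_mul_right h2 (b * a)⁻¹
        rw [inv_mul_cancel] at h4
        have h5 := mul_le_mul_left h4 (ε ^ (p + q))⁻¹
        rwa [mul_assoc, mul_inv_cancel, mul_one, one_mul] at h5
      have h6 : c < ε * ε := by
        calc c = (b * a)⁻¹ * (a * b) := rfl
          _ < (b * a)⁻¹ * ε ^ (p + q + 2) := mul_lt_mul_right h1 _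
          _ ≤ (ε ^ (p + q))⁻¹ * ε ^ (p + q + 2) := mul_le_mul_left h3 _
          _ = ε ^ (2 : ℤ) := by
              rw [← zpow_neg, ← zpow_add]; congr 1; ring
          _ = ε * ε := by
              rw [show (2 : ℤ) = 1 + 1 from rfl, zpow_add, zpow_one]
      exact absurd (lt_of_le_of_lt hεsq h6) (lt_irrefl _)
    intro a b
    rcases lt_trichotomy ((b * a)⁻¹ * (a * b)) 1 with h | h | h
    · exfalso
      apply aux b a
      have h1 : (1 : H) < ((b * a)⁻¹ * (a * b))⁻¹ := by
        have := mul_lt_mul_left h ((b * a)⁻¹ * (a * b))⁻¹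
        rwa [mul_inv_cancel, one_mul] at this
      rwa [show ((b * a)⁻¹ * (a * b))⁻¹ = (a * b)⁻¹ * (b * a) from by group] at h1
    · have := congrArg (fun z => (b * a) * z) h
      simpa [← mul_assoc, mul_inv_cancel_right, mul_one] using this
    · exact absurd h (fun h => aux a b h)

end holder

section pbar
variable {C : Subgroup G}

theorem pbar_mul_c (hr : IsLeftOrder r) (hC : IsConvexSubgroup r C) {g c : G}
    (hg : g ∉ C ∧ r 1 g) (hcC : c ∈ C) : g * c ∉ C ∧ r 1 (g * c) := by
  constructor
  · intro hm
    exact hg.1 (by simpa using C.mul_mem hm (C.inv_mem hcC))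
  · have h1 : r g⁻¹ c := by
      refine neg_lt_memC hr hC (inv_neg' hr hg.2) ?_ hcC
      intro hm; exact hg.1 (by simpa using C.inv_mem hm)
    have := lmul hr g h1
    rwa [mul_inv_cancel] at this

theorem pbar_c_mul (hr : IsLeftOrder r) (hC : IsConvexSubgroup r C) {g c : G}
    (hcC : c ∈ C) (hg : g ∉ C ∧ r 1 g) : c * g ∉ C ∧ r 1 (c * g) := by
  constructor
  · intro hm
    exact hg.1 (by simpa using C.mul_mem (C.inv_mem hcC) hm)
  · have h1 : r c⁻¹ g := lt_of_memC hr hC hg.2 hg.1 (C.inv_mem hcC)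
    have := lmul hr c h1
    rwa [mul_inv_cancel] at this

theorem pbar_mul (hr : IsLeftOrder r) (hC : IsConvexSubgroup r C) {g h : G}
    (hg : g ∉ C ∧ r 1 g) (hh : h ∉ C ∧ r 1 h) : g * h ∉ C ∧ r 1 (g * h) := by
  constructor
  · intro hm
    have h2 := lmul hr g⁻¹ (lt_of_memC hr hC hg.2 hg.1 hm)
    rw [inv_mul_cancel_left, inv_mul_cancel] at h2
    exact rasym hr hh.2 h2
  · have := lmul hr g hh.2
    rw [mul_one] at this
    exact rtrans hr hg.2 this

theorem pbar_conj (hr : IsLeftOrder r) (hc : IsConradian r) (hC : IsConvexSubgroup r C)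
    (hmax : ∀ D : Subgroup G, IsConvexSubgroup r D → C < D → D = ⊤)
    {g : G} (hg : g ∉ C ∧ r 1 g) (h : G) : h * g * h⁻¹ ∉ C ∧ r 1 (h * g * h⁻¹) := by
  have hnormal := conj_memC hr hc hC hmax
  have hzC : h * g * h⁻¹ ∉ C := by
    intro hm
    apply hg.1
    have := hnormal _ hm h⁻¹
    rwa [show h⁻¹ * (h * g * h⁻¹) * h⁻¹⁻¹ = g from by group] at this
  refine ⟨hzC, ?_⟩
  set z := h * g * h⁻¹ with hzdef
  rcases rtri hr 1 z with h1 | h1 | h1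
  · exact h1
  · exfalso
    have hgone : g = 1 := by
      have := congrArg (fun w => h⁻¹ * w * h) h1
      exact (by simpa [hzdef, mul_assoc] using this : (1:G) = g).symm
    rw [hgone] at hg
    exact rirr hr 1 hg.2
  · exfalso
    have hzi : r 1 z⁻¹ := neg_inv' hr h1
    have hziC : z⁻¹ ∉ C := fun hm => hzC (by simpa using C.inv_mem hm)
    obtain ⟨n, hh1, -⟩ := UBT hr hc hC hmax hzi hziC h
    obtain ⟨m, hh2⟩ := LBT hr hc hC hmax hzi hziC h
    have hzin : ∀ k : ℕ, (z⁻¹) ^ k = h * (g ^ k)⁻¹ * h⁻¹ := by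
      intro k
      have h2 : z⁻¹ = h * g⁻¹ * h⁻¹ := by rw [hzdef]; group
      rw [h2, conj_pow, inv_pow]
    -- e1 : r (g ^ n) h⁻¹
    have e1 : r (g ^ n) h⁻¹ := by
      rw [hzin] at hh1
      have h3 := lmul hr h⁻¹ hh1
      rw [inv_mul_cancel, ← mul_assoc, ← mul_assoc, inv_mul_cancel, one_mul] at h3
      have h4 := lmul hr (g ^ n) h3
      rwa [mul_one, ← mul_assoc, mul_inv_cancel, one_mul] at h4
    -- e2 : r h⁻¹ ((g ^ m)⁻¹)
    have e2 : r h⁻¹ ((g ^ m)⁻¹) := by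
      have h2 : ((z⁻¹) ^ m)⁻¹ = h * g ^ m * h⁻¹ := by rw [hzin]; group
      rw [h2] at hh2
      have h3 := lmul hr h⁻¹ hh2
      rw [inv_mul_cancel, ← mul_assoc, ← mul_assoc, inv_mul_cancel, one_mul] at h3
      have h4 := lmul hr (g ^ m)⁻¹ h3
      rwa [mul_one, ← mul_assoc, inv_mul_cancel, one_mul] at h4
    have p1 : r 1 h⁻¹ := by
      rcases pos_pow hr hg.2 n with h5 | h5
      · rwa [h5] at e1
      · exact rtrans hr h5 e1
    have p2 : r h⁻¹ 1 := by
      rcases pos_pow hr hg.2 m with h5 | h5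
      · rw [h5] at e2; simpa using e2
      · exact rtrans hr e2 (inv_neg' hr h5)
    exact rasym hr p1 p2

theorem pbar_tri (hr : IsLeftOrder r) (g : G) :
    g ∈ C ∨ (g ∉ C ∧ r 1 g) ∨ (g⁻¹ ∉ C ∧ r 1 g⁻¹) := by
  by_cases hm : g ∈ C
  · exact Or.inl hm
  · rcases rtri hr 1 g with h | h | h
    · exact Or.inr (Or.inl ⟨hm, h⟩)
    · exact absurd (h ▸ C.one_mem) hm
    · exact Or.inr (Or.inr ⟨fun hmm => hm (by simpa using C.inv_mem hmm), neg_inv' hr h⟩)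

end pbar

section quotient
variable {C : Subgroup G}

theorem quotient_comm (hr : IsLeftOrder r) (hc : IsConradian r) (hC : IsConvexSubgroup r C)
    (hmax : ∀ D : Subgroup G, IsConvexSubgroup r D → C < D → D = ⊤)
    (hN : C.Normal) : ∀ a b : G ⧸ C, a * b = b * a := by
  classical
  haveI := hN
  -- positivity predicate on the quotient
  let qpos : G ⧸ C → Prop := fun a =>
    Quotient.liftOn' a (fun g => g ∉ C ∧ r 1 g) (by
      intro g h hgh
      have hmem : g⁻¹ * h ∈ C := (QuotientGroup.leftRel_apply).1 hgh
      apply propext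
      constructor
      · intro hg
        have := pbar_mul_c hr hC hg hmem
        rwa [mul_inv_cancel_left] at this
      · intro hh
        have hmem' : h⁻¹ * g ∈ C := by
          have := C.inv_mem hmem; rwa [mul_inv_rev, inv_inv] at this
        have := pbar_mul_c hr hC hh hmem'
        rwa [mul_inv_cancel_left] at this)
  have qpos_mk : ∀ g : G, qpos (g : G ⧸ C) ↔ (g ∉ C ∧ r 1 g) := fun g => Iff.rfl
  have hq1 : ¬ qpos (1 : G ⧸ C) := by
    rw [show (1 : G ⧸ C) = ((1 : G) : G ⧸ C) from rfl, qpos_mk]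
    rintro ⟨h1, -⟩
    exact h1 C.one_mem
  have hqmul : ∀ a b : G ⧸ C, qpos a → qpos b → qpos (a * b) := by
    intro a b
    refine Quotient.inductionOn₂' a b ?_
    intro g h hg hh
    exact (qpos_mk _).2 (pbar_mul hr hC ((qpos_mk g).1 hg) ((qpos_mk h).1 hh))
  have hqasym : ∀ a : G ⧸ C, qpos a → qpos a⁻¹ → False := by
    intro a h1 h2
    have := hqmul _ _ h1 h2
    rw [mul_inv_cancel] at this
    exact hq1 this
  have hqtri : ∀ a b : G ⧸ C, qpos (a⁻¹ * b) ∨ a = b ∨ qpos (b⁻¹ * a) := by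
    intro a b
    refine Quotient.inductionOn₂' a b ?_
    intro g h
    rcases pbar_tri (C := C) hr (g⁻¹ * h) with h1 | h1 | h1
    · right; left
      exact (QuotientGroup.eq).2 h1
    · left
      exact (qpos_mk _).2 h1
    · right; right
      rw [mul_inv_rev, inv_inv] at h1
      exact (qpos_mk _).2 h1
  have hqconj : ∀ (v a : G ⧸ C), qpos a → qpos (v⁻¹ * a * v) := by
    intro v a
    refine Quotient.inductionOn₂' v a ?_
    intro u g hg
    have hconj := pbar_conj hr hc hC hmax ((qpos_mk g).1 hg) u⁻¹
    rw [inv_inv] at hconj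
    show qpos (((u : G)⁻¹ * g * u : G) : G ⧸ C)
    exact (qpos_mk _).2 hconj
  letI : LinearOrder (G ⧸ C) :=
    { le := fun a b => a = b ∨ qpos (a⁻¹ * b)
      lt := fun a b => qpos (a⁻¹ * b)
      le_refl := fun a => Or.inl rfl
      le_trans := by
        rintro a b c (rfl | h1) h2
        · exact h2
        · rcases h2 with rfl | h2
          · exact Or.inr h1
          · refine Or.inr ?_
            have := hqmul _ _ h1 h2
            rwa [show a⁻¹ * b * (b⁻¹ * c) = a⁻¹ * c from by group] at this
      le_antisymm := by
        rintro a b (rfl | h1) h2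
        · rfl
        · rcases h2 with rfl | h2
          · rfl
          · exfalso
            refine hqasym _ h1 ?_
            rwa [show (a⁻¹ * b)⁻¹ = b⁻¹ * a from by group]
      le_total := by
        intro a b
        rcases hqtri a b with h | h | h
        · exact Or.inl (Or.inr h)
        · exact Or.inl (Or.inl h)
        · exact Or.inr (Or.inr h)
      lt_iff_le_not_ge := by
        intro a b
        constructor
        · intro h
          refine ⟨Or.inr h, ?_⟩
          rintro (rfl | h2)
          · refine hq1 ?_
            have h' : qpos (b⁻¹ * b) := h
            rwa [inv_mul_cancel] at h'
          · refine hqasym _ h ?_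
            rwa [show (a⁻¹ * b)⁻¹ = b⁻¹ * a from by group]
        · rintro ⟨rfl | h1, h2⟩
          · exact absurd (Or.inl rfl) h2
          · exact h1
      toDecidableLE := fun _ _ => Classical.dec _ }
  haveI : CovariantClass (G ⧸ C) (G ⧸ C) (· * ·) (· < ·) := by
    constructor
    intro c a b h
    show qpos ((c * a)⁻¹ * (c * b))
    rwa [show (c * a)⁻¹ * (c * b) = a⁻¹ * b from by group]
  haveI : CovariantClass (G ⧸ C) (G ⧸ C) (Function.swap (· * ·)) (· < ·) := by
    constructor
    intro c a b h
    show qpos ((a * c)⁻¹ * (b * c))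
    have h2 := hqconj c _ h
    rwa [show c⁻¹ * (a⁻¹ * b) * c = (a * c)⁻¹ * (b * c) from by group] at h2
  refine holder_comm ?_
  intro x ε hε
  obtain ⟨u, rfl⟩ := QuotientGroup.mk_surjective x
  obtain ⟨e, rfl⟩ := QuotientGroup.mk_surjective ε
  have hee : e ∉ C ∧ r 1 e := by
    have h1 : qpos ((1 : G ⧸ C)⁻¹ * (e : G ⧸ C)) := hε
    rw [inv_one, one_mul] at h1
    exact (qpos_mk e).1 h1
  obtain ⟨n₀, h1, -⟩ := UBT hr hc hC hmax hee.2 hee.1 u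
  by_cases hm : u⁻¹ * e ^ n₀ ∈ C
  · refine ⟨n₀ + 1, ?_⟩
    show qpos (((u : G ⧸ C))⁻¹ * ((e : G ⧸ C)) ^ (n₀ + 1))
    rw [← QuotientGroup.mk_pow, ← QuotientGroup.mk_inv, ← QuotientGroup.mk_mul]
    refine (qpos_mk _).2 ?_
    rw [show u⁻¹ * e ^ (n₀ + 1) = (u⁻¹ * e ^ n₀) * e from by rw [pow_succ]; group]
    exact pbar_c_mul hr hC hm hee
  · refine ⟨n₀, ?_⟩
    show qpos (((u : G ⧸ C))⁻¹ * ((e : G ⧸ C)) ^ n₀)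
    rw [← QuotientGroup.mk_pow, ← QuotientGroup.mk_inv, ← QuotientGroup.mk_mul]
    exact (qpos_mk _).2 ⟨hm, (pos_iff hr).1 h1⟩

end quotient

section final

theorem bot_convex (hr : IsLeftOrder r) : IsConvexSubgroup r (⊥ : Subgroup G) := by
  intro f g h hf hh hfg hgh
  rw [Subgroup.mem_bot] at hf hh
  subst hf; subst hh
  exact absurd (rtrans hr hfg hgh) (rirr hr 1)

theorem top_convex : IsConvexSubgroup r (⊤ : Subgroup G) := fun _ _ _ _ _ _ _ => trivial

theorem restrict_leftOrder (hr : IsLeftOrder r) (C : Subgroup G) :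
    IsLeftOrder (fun a b : C => r ↑a ↑b) := by
  have i1 : IsTrichotomous C (fun a b : C => r ↑a ↑b) := ⟨fun a b h1 h2 => by
    rcases rtri hr (a : G) (b : G) with h | h | h
    exacts [absurd h h1, Subtype.ext h, absurd h h2]⟩
  have i2 : IsIrrefl C (fun a b : C => r ↑a ↑b) := ⟨fun a => rirr hr ↑a⟩
  have i3 : IsTrans C (fun a b : C => r ↑a ↑b) := ⟨fun _ _ _ h1 h2 => rtrans hr h1 h2⟩
  exact ⟨{ toTrichotomous := i1, toIsStrictOrder := { toIrrefl := i2, toIsTrans := i3 } },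
    fun h f g hfg => lmul hr (h : G) hfg⟩

theorem restrict_conradian (hc : IsConradian r) (C : Subgroup G) :
    IsConradian (fun a b : C => r ↑a ↑b) := by
  intro f g hf hg
  obtain ⟨k, hk⟩ := hc ↑f ↑g hf hg
  refine ⟨k, ?_⟩
  show r ↑g ↑(f * g ^ k)
  have : ((f * g ^ k : C) : G) = (f : G) * (g : G) ^ k := by
    push_cast
    rfl
  rw [this]
  exact hk

theorem map_convex (hr : IsLeftOrder r) {C : Subgroup G} (hC : IsConvexSubgroup r C)
    {D : Subgroup C} (hD : IsConvexSubgroup (fun a b : C => r ↑a ↑b) D) :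
    IsConvexSubgroup r (D.map C.subtype) := by
  intro f g h hf hh hfg hgh
  rw [Subgroup.mem_map] at hf hh
  obtain ⟨f₀, hf₀D, rfl⟩ := hf
  obtain ⟨h₀, hh₀D, rfl⟩ := hh
  have hgC : g ∈ C := hC ↑f₀ g ↑h₀ f₀.2 h₀.2 hfg hgh
  rw [Subgroup.mem_map]
  exact ⟨⟨g, hgC⟩, hD f₀ ⟨g, hgC⟩ h₀ hf₀D hh₀D hfg hgh, rfl⟩

theorem main_aux : ∀ (n : ℕ) (G : Type*) [Group G] (r : G → G → Prop),
    IsLeftOrder r → IsConradian r →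
    ∀ (hfin : {C : Subgroup G | IsConvexSubgroup r C}.Finite),
      {C : Subgroup G | IsConvexSubgroup r C}.ncard ≤ n → IsSolvable G := by
  intro n
  induction n with
  | zero =>
    intro G _ r hr hc hfin hcard
    exfalso
    have htopS : (⊤ : Subgroup G) ∈ {C : Subgroup G | IsConvexSubgroup r C} := top_convex
    have h0 : {C : Subgroup G | IsConvexSubgroup r C}.ncard = 0 :=
      le_antisymm hcard (Nat.zero_le _)
    rw [Set.ncard_eq_zero hfin] at h0
    rw [h0] at htopS
    exact htopS
  | succ n ih =>
    intro G _ r hr hc hfin hcard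
    by_cases htriv : (⊥ : Subgroup G) = ⊤
    · exact isSolvable_of_top_eq_bot G htriv.symm
    · set S := {C : Subgroup G | IsConvexSubgroup r C} with hSdef
      have htopS : (⊤ : Subgroup G) ∈ S := top_convex
      set s := {D : Subgroup G | IsConvexSubgroup r D ∧ D ≠ ⊤} with hsdef
      have hbots : ⊥ ∈ s := ⟨bot_convex hr, htriv⟩
      have hsfin : s.Finite := hfin.subset (fun D hD => hD.1)
      obtain ⟨C, hCs, hCmax'⟩ := Set.Finite.exists_maximalFor id s hsfin ⟨⊥, hbots⟩
      have hCconv := hCs.1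
      have hmax : ∀ D : Subgroup G, IsConvexSubgroup r D → C < D → D = ⊤ := by
        intro D hD hlt
        by_contra hne
        exact hlt.ne (le_antisymm hlt.le (hCmax' ⟨hD, hne⟩ hlt.le))
      have hN : C.Normal := ⟨fun c hc' g => conj_memC hr hc hCconv hmax c hc' g⟩
      -- solvability of C via induction
      have hr' := restrict_leftOrder hr C
      have hc' := restrict_conradian hc C
      have hmapne : ∀ D : Subgroup C, (D.map C.subtype) ≠ ⊤ := by
        intro D heq
        have hle := Subgroup.map_subtype_le D
        rw [heq] at hle
        exact hCs.2 (top_le_iff.1 hle)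
      set A := {D : Subgroup C | IsConvexSubgroup (fun a b : C => r ↑a ↑b) D} with hAdef
      have hinj : Function.Injective (fun D : Subgroup C => D.map C.subtype) :=
        Subgroup.map_injective C.subtype_injective
      have himg : (fun D : Subgroup C => D.map C.subtype) '' A ⊆ S \ {⊤} := by
        rintro _ ⟨D, hD, rfl⟩
        exact ⟨map_convex hr hCconv hD, hmapne D⟩
      have hAfin : A.Finite :=
        Set.Finite.of_finite_image ((hfin.subset Set.diff_subset).subset himg) hinj.injOn
      have hcardA : A.ncard ≤ n := by
        have h1 : A.ncard = ((fun D : Subgroup C => D.map C.subtype) '' A).ncard :=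
          (Set.ncard_image_of_injective A hinj).symm
        have h2 : ((fun D : Subgroup C => D.map C.subtype) '' A).ncard ≤ (S \ {⊤}).ncard :=
          Set.ncard_le_ncard himg (hfin.subset Set.diff_subset)
        have h3 : (S \ {⊤}).ncard < S.ncard :=
          Set.ncard_diff_singleton_lt_of_mem htopS hfin
        omega
      haveI hsolC : IsSolvable C := ih C (fun a b : C => r ↑a ↑b) hr' hc' hAfin hcardA
      haveI := hN
      have hcomm := quotient_comm hr hc hCconv hmax hN
      haveI hsolQ : IsSolvable (G ⧸ C) := isSolvable_of_comm hcomm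
      exact solvable_of_ker_le_range (hG' := hsolC) (hG'' := hsolQ) C.subtype (QuotientGroup.mk' C)
        (by rw [QuotientGroup.ker_mk', Subgroup.range_subtype])

end final

end ConradAux

/-- If a group admits a Conradian left order with only finitely many convex
subgroups, then the group is solvable. -/
theorem stmt_8 {G : Type*} [Group G] (r : G → G → Prop) (hr : IsLeftOrder r)
    (hc : IsConradian r)
    (hfin : {C : Subgroup G | IsConvexSubgroup r C}.Finite) :
    IsSolvable G :=
  ConradAux.main_aux {C : Subgroup G | IsConvexSubgroup r C}.ncard G r hr hc hfin le_rfl
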